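/- arXiv:1705.06007 — 2 statements merged into one kernel-verified Lean document; each statement's English description precedes it below -/
import Mathlib

section
/- Let α_1, …, α_m ∈ B_k and let I = ⟨α_1, …, α_m⟩ be the ideal they generate. Then I is the principal ideal generated by the single element Σ_{A ⊆ {1,…,m}, A ≠ ∅} (−1)^{|A|+1} (∏_{j∈A} α_j)^{p^r − 1}. In particular, every ideal of B_k is principal. -/
open MvPolynomial

set_option synthInstance.maxHeartbeats 400000
set_option maxHeartbeats 1000000

noncomputable def relIdeal (p r k : ℕ) [Fact p.Prime] : Ideal (MvPolynomial (Fin k) (GaloisField p r)) :=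
  Ideal.span (Set.range fun i : Fin k => X i ^ 2 - X i)

/-- `B p r k` is the ring `F_{p^r}[v_1,…,v_k]/⟨v_i^2 - v_i⟩`. -/
abbrev B (p r k : ℕ) [Fact p.Prime] :=
  MvPolynomial (Fin k) (GaloisField p r) ⧸ relIdeal p r k

/-- the image of the variable `v_i` in `B p r k`. -/
noncomputable def v (p r k : ℕ) [Fact p.Prime] (i : Fin k) : B p r k :=
  Ideal.Quotient.mk _ (X i)

/-- Evaluation of everything at 0, used to show `B` is nontrivial of char `p`. -/
noncomputable def evZero (p r k : ℕ) [Fact p.Prime] :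
    B p r k →ₐ[GaloisField p r] GaloisField p r :=
  Ideal.Quotient.liftₐ (relIdeal p r k) (aeval fun _ => 0) (by
    intro a ha
    have hle : relIdeal p r k ≤ RingHom.ker (aeval (R := GaloisField p r)
        (fun _ : Fin k => (0 : GaloisField p r))).toRingHom := by
      rw [relIdeal, Ideal.span_le]
      rintro _ ⟨i, rfl⟩
      simp [RingHom.mem_ker]
    exact hle ha)

lemma charB (p r k : ℕ) [Fact p.Prime] : CharP (B p r k) p := by
  have hinj : Function.Injective (algebraMap (GaloisField p r) (B p r k)) := by
    intro x y hxy
    have := congrArg (evZero p r k) hxy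
    simpa using this
  exact charP_of_injective_algebraMap hinj p

lemma v_idem (p r k : ℕ) [Fact p.Prime] (i : Fin k) :
    IsIdempotentElem (v p r k i) := by
  have h : Ideal.Quotient.mk (relIdeal p r k) (X i ^ 2 - X i) = 0 := by
    rw [Ideal.Quotient.eq_zero_iff_mem]
    exact Ideal.subset_span ⟨i, rfl⟩
  have : (v p r k i) ^ 2 - v p r k i = 0 := by
    simpa [v, sub_eq_zero] using h
  have h2 := sub_eq_zero.mp this
  simpa [IsIdempotentElem, sq] using h2

lemma B_pow_card (p r k : ℕ) [Fact p.Prime] (hr : 1 ≤ r) (x : B p r k) :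
    x ^ p ^ r = x := by
  haveI : CharP (B p r k) p := charB p r k
  haveI : ExpChar (B p r k) p := .prime Fact.out
  have h : (iterateFrobenius (B p r k) p r).comp
      (Ideal.Quotient.mk (relIdeal p r k)) =
      (Ideal.Quotient.mk (relIdeal p r k)) := by
    apply MvPolynomial.ringHom_ext
    · intro a
      haveI : Fintype (GaloisField p r) := Fintype.ofFinite _
      have hq : Fintype.card (GaloisField p r) = p ^ r := by
        rw [← Nat.card_eq_fintype_card]
        exact GaloisField.card p r (by omega)
      have ha : a ^ p ^ r = a := by
        have := FiniteField.pow_card a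
        rwa [hq] at this
      simp only [RingHom.comp_apply, iterateFrobenius_def, RingHom.coe_coe]
      rw [← map_pow, ← C_pow, ha]
    · intro i
      have hidem := v_idem p r k i
      have : (v p r k i) ^ p ^ r = v p r k i := by
        have hq : p ^ r = (p ^ r - 1) + 1 := by
          have : 1 ≤ p ^ r := Nat.one_le_pow _ _ (Fact.out : p.Prime).pos
          omega
        rw [hq]
        exact hidem.pow_succ_eq _
      simpa [v, iterateFrobenius_def] using this
  obtain ⟨P, rfl⟩ := Ideal.Quotient.mk_surjective x
  have := RingHom.congr_fun h P
  simpa [iterateFrobenius_def] using this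

lemma key (p r k m : ℕ) [Fact p.Prime] (hr : 1 ≤ r) (α : Fin m → B p r k) :
    Ideal.span (Set.range α) =
      Ideal.span {∑ A ∈ (Finset.univ : Finset (Fin m)).powerset.erase ∅,
        (-1 : B p r k) ^ (A.card + 1) * (∏ j ∈ A, α j) ^ (p ^ r - 1)} := by
  have hp : 1 < p := (Fact.out : p.Prime).one_lt
  have hq2 : 2 ≤ p ^ r := by
    have := Nat.one_lt_pow (by omega : r ≠ 0) hp
    omega
  set q := p ^ r with hqdef
  set e : Fin m → B p r k := fun j => α j ^ (q - 1) with he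
  set G : B p r k := ∑ A ∈ (Finset.univ : Finset (Fin m)).powerset.erase ∅,
      (-1 : B p r k) ^ (A.card + 1) * (∏ j ∈ A, α j) ^ (q - 1) with hGdef
  -- α j * e j = α j
  have hae : ∀ j, α j * e j = α j := by
    intro j
    rw [he]
    have : α j * α j ^ (q - 1) = α j ^ q := by
      rw [← pow_succ']
      congr 1
      omega
    rw [this, hqdef]
    exact B_pow_card p r k hr (α j)
  -- G = 1 - ∏ (1 - e j)
  have hG : G = 1 - ∏ j, (1 - e j) := by
    have hexp : ∏ j, (1 - e j) =
        ∑ A : Finset (Fin m), (-1 : B p r k) ^ A.card * ∏ j ∈ A, e j := by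
      have := Fintype.prod_add (fun j => -e j) (fun _ => (1 : B p r k))
      simp only [Finset.prod_const_one, mul_one] at this
      calc ∏ j, (1 - e j) = ∏ j, (-e j + 1) := by
            apply Finset.prod_congr rfl; intros; ring
        _ = ∑ A : Finset (Fin m), ∏ j ∈ A, (-e j) := this
        _ = ∑ A : Finset (Fin m), (-1 : B p r k) ^ A.card * ∏ j ∈ A, e j := by
            apply Finset.sum_congr rfl
            intro A _
            rw [← Finset.prod_const (-1 : B p r k), ← Finset.prod_mul_distrib]
            apply Finset.prod_congr rfl; intros; ring
    have hsplit : ∑ A : Finset (Fin m), (-1 : B p r k) ^ A.card * ∏ j ∈ A, e j =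
        1 + ∑ A ∈ (Finset.univ : Finset (Finset (Fin m))).erase ∅,
          (-1 : B p r k) ^ A.card * ∏ j ∈ A, e j := by
      rw [← Finset.add_sum_erase _ _ (Finset.mem_univ (∅ : Finset (Fin m)))]
      simp
    have hGsum : G = - ∑ A ∈ (Finset.univ : Finset (Finset (Fin m))).erase ∅,
        (-1 : B p r k) ^ A.card * ∏ j ∈ A, e j := by
      rw [hGdef, Finset.powerset_univ, ← Finset.sum_neg_distrib]
      apply Finset.sum_congr rfl
      intro A _
      rw [he]
      simp only [← Finset.prod_pow]
      ring
    rw [hGsum, hexp, hsplit]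
    ring
  have hmul : ∀ j, α j * G = α j := by
    intro j
    rw [hG, mul_sub, mul_one]
    have hzero : α j * ∏ l, (1 - e l) = 0 := by
      rw [← Finset.mul_prod_erase Finset.univ _ (Finset.mem_univ j), ← mul_assoc]
      have : α j * (1 - e j) = 0 := by
        rw [mul_sub, mul_one, hae j, sub_self]
      rw [this, zero_mul]
    rw [hzero, sub_zero]
  apply le_antisymm <;> rw [Ideal.span_le]
  · rintro _ ⟨j, rfl⟩
    exact Ideal.mem_span_singleton'.mpr ⟨α j, hmul j⟩
  · intro x hx
    rw [Set.mem_singleton_iff] at hx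
    subst hx
    apply Ideal.sum_mem
    intro A hA
    obtain ⟨hAne, -⟩ := Finset.mem_erase.mp hA
    obtain ⟨j0, hj0⟩ := Finset.nonempty_iff_ne_empty.mpr hAne
    apply Ideal.mul_mem_left
    apply Ideal.pow_mem_of_mem
    · rw [← Finset.mul_prod_erase A α hj0]
      exact Ideal.mul_mem_right _ _ (Ideal.subset_span ⟨j0, rfl⟩)
    · omega

/-- The ideal `⟨α_1, …, α_m⟩` of `B_k` is generated by the single element
`Σ_{∅ ≠ A ⊆ {1,…,m}} (−1)^{|A|+1} (∏_{j∈A} α_j)^{p^r−1}`; in particular every ideal of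
`B_k` is principal. -/
theorem stmt_7 (p r k m : ℕ) [Fact p.Prime] (hr : 1 ≤ r) (α : Fin m → B p r k) :
    Ideal.span (Set.range α) =
      Ideal.span {∑ A ∈ (Finset.univ : Finset (Fin m)).powerset.erase ∅,
        (-1 : B p r k) ^ (A.card + 1) * (∏ j ∈ A, α j) ^ (p ^ r - 1)} ∧
    ∀ I : Ideal (B p r k), I.IsPrincipal := by
  refine ⟨key p r k m hr α, fun I => ?_⟩
  obtain ⟨S, hS⟩ := IsNoetherian.noetherian I
  set β : Fin S.card → B p r k := fun i => (S.equivFin.symm i : B p r k) with hβ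
  have hrange : Set.range β = (S : Set (B p r k)) := by
    ext x
    constructor
    · rintro ⟨i, rfl⟩; exact (S.equivFin.symm i).2
    · intro hx; exact ⟨S.equivFin ⟨x, hx⟩, by simp [hβ]⟩
  have hkey := key p r k S.card hr β
  rw [hrange] at hkey
  exact ⟨_, by rw [← hS]; exact hkey⟩
end

section
/- Let k ≥ 1. An ideal I of B_k is maximal if and only if there exists a choice w_i ∈ {v_i, 1 − v_i} for 1 ≤ i ≤ k such that I = ⟨w_1, w_2, …, w_k⟩. -/
open MvPolynomial

set_option synthInstance.maxHeartbeats 400000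
set_option maxHeartbeats 1000000

lemma key_mem {F : Type*} [CommRing F] {k : ℕ} (c : Fin k → F) (f : MvPolynomial (Fin k) F) :
    f - C (aeval c f) ∈ Ideal.span (Set.range fun i => (X i : MvPolynomial (Fin k) F) - C (c i)) := by
  induction f using MvPolynomial.induction_on with
  | C a => simp
  | add f g hf hg =>
      have : f + g - C (aeval c (f + g)) = (f - C (aeval c f)) + (g - C (aeval c g)) := by
        simp [map_add]; ring
      rw [this]; exact add_mem hf hg
  | mul_X f i hf =>
      have : f * X i - C (aeval c (f * X i))
          = f * (X i - C (c i)) + (f - C (aeval c f)) * C (c i) := by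
        simp [map_mul]; ring
      rw [this]
      exact add_mem (Ideal.mul_mem_left _ _ (Ideal.subset_span ⟨i, rfl⟩))
        (Ideal.mul_mem_right _ _ hf)

lemma spanMax (p r k : ℕ) [Fact p.Prime] (w : Fin k → B p r k)
    (hw : ∀ i, w i = v p r k i ∨ w i = 1 - v p r k i) :
    (Ideal.span (Set.range w)).IsMaximal := by
  classical
  set F := GaloisField p r
  set c : Fin k → F := fun i => if w i = v p r k i then 0 else 1 with hc
  have hce : ∀ i, (Ideal.Quotient.mk (relIdeal p r k)) (X i - C (c i)) = w i ∨
      (Ideal.Quotient.mk (relIdeal p r k)) (X i - C (c i)) = - w i := by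
    intro i
    by_cases h : w i = v p r k i
    · left; simp [hc, h, v, map_sub]
    · right
      have h2 : w i = 1 - v p r k i := (hw i).resolve_left h
      simp only [hc, if_neg h, map_sub, h2]
      simp [v]
  have hkill : ∀ a ∈ relIdeal p r k, (aeval c : MvPolynomial (Fin k) F →ₐ[F] F) a = 0 := by
    intro a ha
    refine (Ideal.span_le (I := RingHom.ker (aeval c : MvPolynomial (Fin k) F →ₐ[F] F).toRingHom)).2 ?_ ha
    rintro _ ⟨i, rfl⟩
    simp only [SetLike.mem_coe, RingHom.mem_ker, AlgHom.toRingHom_eq_coe, RingHom.coe_coe,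
      map_sub, map_pow, aeval_X]
    by_cases h : w i = v p r k i <;> simp [hc, h]
  let φ : B p r k →+* F :=
    Ideal.Quotient.lift (relIdeal p r k) (aeval c : MvPolynomial (Fin k) F →ₐ[F] F).toRingHom hkill
  have hφsurj : Function.Surjective φ := fun a => ⟨Ideal.Quotient.mk _ (C a), by simp [φ]⟩
  have hker : Ideal.span (Set.range w) = RingHom.ker φ := by
    apply le_antisymm
    · rw [Ideal.span_le]
      rintro _ ⟨i, rfl⟩
      rcases hce i with h | h
      · rw [← h]
        simp [φ, RingHom.mem_ker, hc]
      · have : w i = - (Ideal.Quotient.mk (relIdeal p r k)) (X i - C (c i)) := by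
          rw [h]; ring
        rw [this]
        simp only [SetLike.mem_coe, RingHom.mem_ker, map_neg, neg_eq_zero]
        simp [φ, hc]
    · intro x hx
      obtain ⟨f, rfl⟩ := Ideal.Quotient.mk_surjective (I := relIdeal p r k) x
      have hx0 : aeval c f = 0 := hx
      have := key_mem c f
      rw [hx0, map_zero, sub_zero] at this
      have : (Ideal.Quotient.mk (relIdeal p r k)) f ∈
          Ideal.map (Ideal.Quotient.mk (relIdeal p r k))
            (Ideal.span (Set.range fun i => (X i : MvPolynomial (Fin k) F) - C (c i))) :=
        Ideal.mem_map_of_mem _ this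
      rw [Ideal.map_span] at this
      refine Ideal.span_le.mpr ?_ this
      rintro _ ⟨_, ⟨i, rfl⟩, rfl⟩
      rcases hce i with h | h
      · rw [h]; exact Ideal.subset_span ⟨i, rfl⟩
      · rw [h]; exact neg_mem (Ideal.subset_span ⟨i, rfl⟩)
  rw [hker]
  exact RingHom.ker_isMaximal_of_surjective φ hφsurj

/-- Let `k ≥ 1`.  An ideal `I` of `B_k` is maximal iff `I = ⟨w_1, …, w_k⟩` for some
choice `w_i ∈ {v_i, 1 - v_i}`. -/
theorem stmt_8 (p r k : ℕ) [Fact p.Prime] (hr : 1 ≤ r) (hk : 1 ≤ k)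
    (I : Ideal (B p r k)) :
    I.IsMaximal ↔
      ∃ w : Fin k → B p r k,
        (∀ i, w i = v p r k i ∨ w i = 1 - v p r k i) ∧
        I = Ideal.span (Set.range w) := by
  classical
  constructor
  · intro hI
    have hprime : I.IsPrime := hI.isPrime
    have hdisj : ∀ i, v p r k i ∈ I ∨ 1 - v p r k i ∈ I := by
      intro i
      have hsq : v p r k i ^ 2 = v p r k i := by
        have : (X i : MvPolynomial (Fin k) (GaloisField p r)) ^ 2 - X i ∈ relIdeal p r k :=
          Ideal.subset_span ⟨i, rfl⟩
        have h0 := (Ideal.Quotient.eq_zero_iff_mem).2 this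
        rw [map_sub, map_pow, sub_eq_zero] at h0
        exact h0
      have hmul : v p r k i * (1 - v p r k i) = 0 := by
        linear_combination -hsq
      have : v p r k i * (1 - v p r k i) ∈ I := by rw [hmul]; exact zero_mem I
      exact hprime.mem_or_mem this
    set w : Fin k → B p r k := fun i => if v p r k i ∈ I then v p r k i else 1 - v p r k i with hwdef
    have hw : ∀ i, w i = v p r k i ∨ w i = 1 - v p r k i := by
      intro i; by_cases h : v p r k i ∈ I <;> simp [hwdef, h]
    have hwI : ∀ i, w i ∈ I := by
      intro i; by_cases h : v p r k i ∈ I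
      · simpa [hwdef, h]
      · have := (hdisj i).resolve_left h
        simpa [hwdef, h]
    have hle : Ideal.span (Set.range w) ≤ I := by
      rw [Ideal.span_le]; rintro _ ⟨i, rfl⟩; exact hwI i
    have hmax := spanMax p r k w hw
    exact ⟨w, hw, (hmax.eq_of_le hI.ne_top hle).symm⟩
  · rintro ⟨w, hw, rfl⟩
    exact spanMax p r k w hw
end
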